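/- Let D be a group with a bi-invariant partial order induced by a normal cone, and let f, g, h be dominant elements. Then γ(f,h) ≤ γ(f,g) · γ(g,h), where γ denotes the relative growth. -/
import Mathlib


open Filter

/-- In a group `D` with a bi-invariant partial order induced by a normal
cone `C`, for dominants `f, g, h` the relative growths satisfy
`γ(f,h) ≤ γ(f,g) · γ(g,h)`.  Here `γ(a,b)` is the limit of
`(inf{p ∈ ℤ : a^p ≥ b^n})/n`, and `γ > 0` is assumed (as in the paper). -/
theorem relative_growth_submultiplicative {D : Type*} [Group D] (C : Set D)
    (hmul : ∀ a b, a ∈ C → b ∈ C → a * b ∈ C)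
    (hconj : ∀ a b, a ∈ C → b * a * b⁻¹ ∈ C)
    (hone : (1 : D) ∈ C)
    (hanti : ∀ a b : D, a * b⁻¹ ∈ C → b * a⁻¹ ∈ C → a = b)
    (f g h : D)
    (hf : f ∈ C ∧ f ≠ 1 ∧ ∀ x : D, ∃ n : ℕ, f ^ n * x⁻¹ ∈ C)
    (hg : g ∈ C ∧ g ≠ 1 ∧ ∀ x : D, ∃ n : ℕ, g ^ n * x⁻¹ ∈ C)
    (hh : h ∈ C ∧ h ≠ 1 ∧ ∀ x : D, ∃ n : ℕ, h ^ n * x⁻¹ ∈ C)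
    (γfg γgh γfh : ℕ → ℤ)
    (hγfg : ∀ n : ℕ, IsLeast {p : ℤ | f ^ p * (g ^ n)⁻¹ ∈ C} (γfg n))
    (hγgh : ∀ n : ℕ, IsLeast {p : ℤ | g ^ p * (h ^ n)⁻¹ ∈ C} (γgh n))
    (hγfh : ∀ n : ℕ, IsLeast {p : ℤ | f ^ p * (h ^ n)⁻¹ ∈ C} (γfh n))
    (A B L : ℝ)
    (hA : Tendsto (fun n : ℕ => (γfg n : ℝ) / n) atTop (nhds A))
    (hB : Tendsto (fun n : ℕ => (γgh n : ℝ) / n) atTop (nhds B))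
    (hL : Tendsto (fun n : ℕ => (γfh n : ℝ) / n) atTop (nhds L))
    (hApos : 0 < A) (hBpos : 0 < B) (hLpos : 0 < L) :
    L ≤ A * B := by

  classical
  have trans : ∀ a b c : D, a * b⁻¹ ∈ C → b * c⁻¹ ∈ C → a * c⁻¹ ∈ C := by
    intro a b c h1 h2
    have := hmul _ _ h1 h2
    simpa [mul_assoc] using this
  set φ : ℕ → ℕ := fun n => (γgh n).toNat with hφ
  have hghR : Tendsto (fun n : ℕ => (γgh n : ℝ)) atTop atTop := by
    have h1 : Tendsto (fun n : ℕ => (γgh n : ℝ) / n * n) atTop atTop :=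
      Tendsto.pos_mul_atTop hBpos hB tendsto_natCast_atTop_atTop
    refine h1.congr' ?_
    filter_upwards [eventually_gt_atTop 0] with n hn
    have hn' : (n : ℝ) ≠ 0 := by positivity
    field_simp
  have hghpos : ∀ᶠ n in atTop, (1:ℤ) ≤ γgh n := by
    filter_upwards [hghR.eventually_ge_atTop (1:ℝ)] with n hn
    exact_mod_cast hn
  have hφat : Tendsto φ atTop atTop := tendsto_atTop.2 (fun N => by
    filter_upwards [hghR.eventually_ge_atTop (N:ℝ)] with n hn
    have hN : (N:ℤ) ≤ γgh n := by exact_mod_cast hn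
    simp only [hφ]
    omega)
  have hφn : Tendsto (fun n : ℕ => (φ n : ℝ) / n) atTop (nhds B) := by
    refine hB.congr' ?_
    filter_upwards [hghpos] with n h1
    have hzφ : ((φ n : ℕ) : ℤ) = γgh n := by simp only [hφ]; omega
    have : ((φ n : ℕ) : ℝ) = ((γgh n : ℤ) : ℝ) := by exact_mod_cast hzφ
    rw [this]
  have key : ∀ᶠ n in atTop,
      (γfh n : ℝ) / n ≤ ((γfg (φ n) : ℝ) / (φ n)) * ((φ n : ℝ) / n) := by
    filter_upwards [hghpos, eventually_gt_atTop 0] with n hg1 hn0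
    have hφpos : 0 < φ n := by simp only [hφ]; omega
    have hzφ : ((φ n : ℕ) : ℤ) = γgh n := by simp only [hφ]; omega
    have hgc : g ^ (φ n) * (h ^ n)⁻¹ ∈ C := by
      have h2 := (hγgh n).1
      rw [← hzφ] at h2
      simpa [zpow_natCast] using h2
    have hfc : f ^ (γfg (φ n)) * (g ^ (φ n))⁻¹ ∈ C := (hγfg (φ n)).1
    have hmem : γfg (φ n) ∈ {p : ℤ | f ^ p * (h ^ n)⁻¹ ∈ C} := trans _ _ _ hfc hgc
    have hle : γfh n ≤ γfg (φ n) := (hγfh n).2 hmem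
    have h1 : (γfh n : ℝ) ≤ (γfg (φ n) : ℝ) := by exact_mod_cast hle
    have hnR : (0:ℝ) < n := by exact_mod_cast hn0
    have hφR : (0:ℝ) < φ n := by exact_mod_cast hφpos
    have hrw : ((γfg (φ n) : ℝ) / (φ n)) * ((φ n : ℝ) / n) = (γfg (φ n) : ℝ) / n := by
      field_simp
    rw [hrw]
    gcongr
  have hRHS : Tendsto (fun n : ℕ => ((γfg (φ n) : ℝ) / (φ n)) * ((φ n : ℝ) / n))
      atTop (nhds (A * B)) := (hA.comp hφat).mul hφn
  exact le_of_tendsto_of_tendsto hL hRHS key
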